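/- The sequences x_n^{(d)} and A_{2n}^{(d)} have the Lucas property: for every prime p, every n ≥ 0 and 0 ≤ q ≤ p-1, x_{np+q}^{(d)} ≡ x_n^{(d)} x_q^{(d)} (mod p) and A_{2(np+q)}^{(d)} ≡ A_{2n}^{(d)} A_{2q}^{(d)} (mod p). Moreover A_{2n}^{(d)} ≡ 0 (mod p) when (p-1)/2 < n ≤ p-1. -/

import Mathlib

open Finset

variable {α : Type*} {p : ℕ}

lemma sum_div_eq_of_no_carry (hp : 0 < p) (s : Finset α) (f : α → ℕ)
    (h : ∑ i ∈ s, f i % p = (∑ i ∈ s, f i) % p) :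
    ∑ i ∈ s, f i / p = (∑ i ∈ s, f i) / p := by
  have h1 : ∑ i ∈ s, f i = p * (∑ i ∈ s, f i / p) + ∑ i ∈ s, f i % p := by
    rw [Finset.mul_sum, ← Finset.sum_add_distrib]
    exact Finset.sum_congr rfl fun i _ => (Nat.div_add_mod (f i) p).symm
  have h2 := Nat.div_add_mod (∑ i ∈ s, f i) p
  refine Nat.eq_of_mul_eq_mul_left hp ?_
  omega

theorem multinomial_lucas (hp : p.Prime) (s : Finset α) (f : α → ℕ)
    (h : ∑ i ∈ s, f i % p = (∑ i ∈ s, f i) % p) :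
    Nat.multinomial s f ≡
      Nat.multinomial s (fun i => f i / p) * Nat.multinomial s (fun i => f i % p) [MOD p] := by
  haveI : Fact p.Prime := ⟨hp⟩
  have hp0 : 0 < p := hp.pos
  induction s using Finset.cons_induction with
  | empty => simp [Nat.ModEq.refl]
  | cons a s has ih =>
    rw [Finset.sum_cons, Finset.sum_cons] at h
    set T := ∑ i ∈ s, f i with hT
    set S := ∑ i ∈ s, f i % p with hS
    have hSmod : S % p = T % p := by
      rw [hS, hT, ← Finset.sum_nat_mod]
    have hSlt : S < p := by
      have := Nat.mod_lt (f a + T) hp0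
      omega
    have hSeq : S = T % p := by
      have h3 : S % p = S := Nat.mod_eq_of_lt hSlt
      omega
    have hfa : f a % p + T % p = (f a + T) % p := by rw [← hSeq]; exact h
    have hfalt : f a % p + T % p < p := by
      have := Nat.mod_lt (f a + T) hp0
      omega
    have hdiv : (f a + T) / p = f a / p + T / p := by
      rw [Nat.add_div hp0]
      simp [Nat.not_le.mpr hfalt]
    have hsumdiv : ∑ i ∈ s, f i / p = T / p :=
      sum_div_eq_of_no_carry hp0 s f hSeq
    have ihc := ih hSeq
    rw [Nat.multinomial_cons, Nat.multinomial_cons, Nat.multinomial_cons]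
    have hluc : (f a + T).choose (f a) ≡
        ((f a + T) % p).choose (f a % p) * ((f a + T) / p).choose (f a / p) [MOD p] :=
      Choose.choose_modEq_choose_mod_mul_choose_div_nat
    calc (f a + T).choose (f a) * Nat.multinomial s f
        ≡ (((f a + T) % p).choose (f a % p) * ((f a + T) / p).choose (f a / p)) *
          (Nat.multinomial s (fun i => f i / p) * Nat.multinomial s (fun i => f i % p))
          [MOD p] := Nat.ModEq.mul hluc ihc
      _ = (f a / p + ∑ i ∈ s, f i / p).choose (f a / p) * Nat.multinomial s (fun i => f i / p) *
          ((f a % p + ∑ i ∈ s, f i % p).choose (f a % p) *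
            Nat.multinomial s (fun i => f i % p)) := by
          rw [hsumdiv, hdiv, ← hS, hSeq, hfa]
          ring

theorem multinomial_carry_dvd (hp : p.Prime) (s : Finset α) (f : α → ℕ)
    (h : ∑ i ∈ s, f i % p ≠ (∑ i ∈ s, f i) % p) :
    p ∣ Nat.multinomial s f := by
  haveI : Fact p.Prime := ⟨hp⟩
  have hp0 : 0 < p := hp.pos
  induction s using Finset.cons_induction with
  | empty => simp at h
  | cons a s has ih =>
    rw [Finset.sum_cons, Finset.sum_cons] at h
    rw [Nat.multinomial_cons]
    by_cases hs : ∑ i ∈ s, f i % p = (∑ i ∈ s, f i) % p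
    · -- carry must happen at the head
      set T := ∑ i ∈ s, f i with hT
      have h' : f a % p + T % p ≠ (f a + T) % p := by rw [hs] at h; exact h
      have hmod : (f a % p + T % p) % p = (f a + T) % p := by
        conv_rhs => rw [Nat.add_mod]
      have hA := Nat.mod_lt (f a) hp0
      have hB := Nat.mod_lt T hp0
      have hC := Nat.mod_lt (f a + T) hp0
      -- f a % p + T % p = (f a + T) % p + p
      have hcarry : f a % p + T % p = (f a + T) % p + p := by
        rcases Nat.lt_or_ge (f a % p + T % p) p with hlt | hge
        · rw [Nat.mod_eq_of_lt hlt] at hmod; omega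
        · have : (f a % p + T % p) - p < p := by omega
          have h2 : (f a % p + T % p) % p = (f a % p + T % p) - p := by
            rw [Nat.mod_eq_sub_mod hge, Nat.mod_eq_of_lt this]
          omega
      have hgt : (f a + T) % p < f a % p := by omega
      have hluc : (f a + T).choose (f a) ≡
          ((f a + T) % p).choose (f a % p) * ((f a + T) / p).choose (f a / p) [MOD p] :=
        Choose.choose_modEq_choose_mod_mul_choose_div_nat
      have : (f a + T).choose (f a) ≡ 0 [MOD p] := by
        rw [Nat.choose_eq_zero_of_lt hgt, zero_mul] at hluc
        exact hluc
      exact Dvd.dvd.mul_right ((Nat.modEq_zero_iff_dvd.mp this)) _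
    · exact Dvd.dvd.mul_left (ih hs) _


noncomputable def Xc (d n : ℕ) : ℕ :=
  ∑ k ∈ Finset.piAntidiag (Finset.univ : Finset (Fin d)) n, (Nat.multinomial Finset.univ k) ^ 2

set_option maxHeartbeats 1000000 in
theorem Xc_lucas {p : ℕ} (hp : p.Prime) (d n q : ℕ) (hq : q < p) :
    Xc d (n * p + q) ≡ Xc d n * Xc d q [MOD p] := by
  have hp0 : 0 < p := hp.pos
  rw [← ZMod.natCast_eq_natCast_iff]
  push_cast [Xc]
  -- kill carry terms
  rw [← Finset.sum_filter_add_sum_filter_not _ (fun k => ∑ i, k i % p = q)]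
  have hzero : ∑ k ∈ (Finset.piAntidiag (Finset.univ : Finset (Fin d)) (n * p + q)).filter
      (fun k => ¬ (∑ i, k i % p = q)), ((Nat.multinomial Finset.univ k : ZMod p)) ^ 2 = 0 := by
    refine Finset.sum_eq_zero fun k hk => ?_
    simp only [Finset.mem_filter, Finset.mem_piAntidiag] at hk
    have hcarry : ∑ i ∈ Finset.univ, k i % p ≠ (∑ i ∈ Finset.univ, k i) % p := by
      rw [hk.1.1]
      have : (n * p + q) % p = q := by
        rw [Nat.mul_comm, Nat.mul_add_mod, Nat.mod_eq_of_lt hq]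
      rw [this]
      simpa using hk.2
    have := multinomial_carry_dvd hp Finset.univ k hcarry
    have : (Nat.multinomial Finset.univ k : ZMod p) = 0 := (ZMod.natCast_eq_zero_iff _ _).mpr this
    rw [this]; ring
  rw [hzero, add_zero]
  -- bijection with product
  rw [Finset.sum_mul_sum]
  rw [← Finset.sum_product']
  refine Finset.sum_nbij' (fun k => (fun i => k i / p, fun i => k i % p))
    (fun ab => fun i => p * ab.1 i + ab.2 i) ?_ ?_ ?_ ?_ ?_
  · intro k hk
    simp only [Finset.mem_filter, Finset.mem_piAntidiag] at hk
    obtain ⟨⟨hsum, -⟩, hmod⟩ := hk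
    simp only [Finset.mem_product, Finset.mem_piAntidiag]
    refine ⟨⟨?_, fun i _ => Finset.mem_univ i⟩, ?_, fun i _ => Finset.mem_univ i⟩
    · have hnc : ∑ i ∈ Finset.univ, k i % p = (∑ i ∈ Finset.univ, k i) % p := by
        rw [hsum, Nat.mul_comm, Nat.mul_add_mod, Nat.mod_eq_of_lt hq]; exact hmod
      rw [sum_div_eq_of_no_carry hp0 _ _ hnc, hsum]
      rw [Nat.mul_comm, Nat.mul_add_div hp0, Nat.div_eq_of_lt hq, add_zero]
    · exact hmod
  · intro ab hab
    simp only [Finset.mem_product, Finset.mem_piAntidiag] at hab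
    obtain ⟨⟨ha, -⟩, hb, -⟩ := hab
    have hblt : ∀ i, ab.2 i < p := fun i =>
      lt_of_le_of_lt (hb ▸ Finset.single_le_sum (fun j _ => Nat.zero_le _) (Finset.mem_univ i)) hq
    simp only [Finset.mem_filter, Finset.mem_piAntidiag]
    refine ⟨⟨?_, fun i _ => Finset.mem_univ i⟩, ?_⟩
    · rw [Finset.sum_add_distrib, ← Finset.mul_sum, ha, hb, Nat.mul_comm]
    · calc ∑ i : Fin d, (p * ab.1 i + ab.2 i) % p = ∑ i : Fin d, ab.2 i := by
            refine Finset.sum_congr rfl fun i _ => ?_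
            rw [Nat.mul_add_mod, Nat.mod_eq_of_lt (hblt i)]
        _ = q := hb
  · intro k hk
    funext i
    exact Nat.div_add_mod (k i) p
  · intro ab hab
    simp only [Finset.mem_product, Finset.mem_piAntidiag] at hab
    obtain ⟨⟨-, -⟩, hb, -⟩ := hab
    have hblt : ∀ i, ab.2 i < p := fun i =>
      lt_of_le_of_lt (hb ▸ Finset.single_le_sum (fun j _ => Nat.zero_le _) (Finset.mem_univ i)) hq
    ext i
    · simp only []
      rw [Nat.mul_add_div hp0, Nat.div_eq_of_lt (hblt i), add_zero]
    · simp only []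
      rw [Nat.mul_add_mod, Nat.mod_eq_of_lt (hblt i)]
  · intro k hk
    simp only [Finset.mem_filter, Finset.mem_piAntidiag] at hk
    obtain ⟨⟨hsum, -⟩, hmod⟩ := hk
    have hnc : ∑ i ∈ Finset.univ, k i % p = (∑ i ∈ Finset.univ, k i) % p := by
      rw [hsum, Nat.mul_comm, Nat.mul_add_mod, Nat.mod_eq_of_lt hq]; exact hmod
    have := multinomial_lucas hp Finset.univ k hnc
    have hc : (Nat.multinomial Finset.univ k : ZMod p) =
        (Nat.multinomial Finset.univ (fun i => k i / p) : ZMod p) *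
        (Nat.multinomial Finset.univ (fun i => k i % p) : ZMod p) := by
      have := (ZMod.natCast_eq_natCast_iff _ _ _).mpr this
      push_cast at this
      exact this
    rw [hc]; ring

/-- The step of the walk on `ℤ^d` determined by a coordinate and a sign. -/
def stepVec (d : ℕ) (s : Fin d × Bool) : Fin d → ℤ :=
  fun t => if t = s.1 then (if s.2 then 1 else -1) else 0

/-- `closedCount d n` is the number `A_{2n}^{(d)}` of walks of length `2n` on `ℤ^d`
starting and ending at the origin. -/
noncomputable def closedCount (d n : ℕ) : ℕ :=
  Nat.card {f : Fin (2 * n) → Fin d × Bool // ∑ i, stepVec d (f i) = 0}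



lemma sum_pair (d : ℕ) (m : Fin d → ℕ) : ∑ s : Fin d × Bool, m s.1 = 2 * ∑ t, m t := by
  rw [Fintype.sum_prod_type, Finset.mul_sum]
  exact Finset.sum_congr rfl fun t _ => by simp [Fintype.sum_bool, two_mul]

lemma multinomial_double (d : ℕ) (m : Fin d → ℕ) :
    Nat.multinomial (Finset.univ : Finset (Fin d × Bool)) (fun s => m s.1) =
      (2 * ∑ t, m t).choose (∑ t, m t) * (Nat.multinomial Finset.univ m) ^ 2 := by
  set N := ∑ t, m t with hN
  set P := ∏ t, Nat.factorial (m t) with hP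
  have hPpos : 0 < P ^ 2 := pow_pos (Finset.prod_pos fun t _ => Nat.factorial_pos _) 2
  have h2 : ∏ s : Fin d × Bool, Nat.factorial (m s.1) = P ^ 2 := by
    rw [Fintype.prod_prod_type, hP, ← Finset.prod_pow]
    exact Finset.prod_congr rfl fun t _ => by simp [Fintype.prod_bool, sq]
  have h1 := Nat.multinomial_spec (Finset.univ : Finset (Fin d × Bool)) (fun s => m s.1)
  rw [h2, sum_pair] at h1
  have h4 := Nat.multinomial_spec (Finset.univ : Finset (Fin d)) m
  rw [← hP, ← hN] at h4
  have h5 : (2 * N).choose N * N.factorial * N.factorial = (2 * N).factorial := by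
    have := Nat.choose_mul_factorial_mul_factorial (Nat.le_mul_of_pos_left N (by norm_num) : N ≤ 2 * N)
    rwa [show 2 * N - N = N by omega] at this
  refine Nat.eq_of_mul_eq_mul_left hPpos ?_
  calc P ^ 2 * Nat.multinomial Finset.univ (fun s : Fin d × Bool => m s.1) = (2 * N).factorial := h1
    _ = (2 * N).choose N * (P * Nat.multinomial Finset.univ m) ^ 2 := by rw [h4, ← h5]; ring
    _ = P ^ 2 * ((2 * N).choose N * (Nat.multinomial Finset.univ m) ^ 2) := by ring

theorem closedCount_eq (d n : ℕ) : closedCount d n = (2 * n).choose n * Xc d n := by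
  classical
  set v : Fin d × Bool → (Fin d → ℤ) := stepVec d with hv
  set u : AddMonoidAlgebra ℕ (Fin d → ℤ) :=
    ∑ s : Fin d × Bool, AddMonoidAlgebra.single (v s) 1 with hu
  have way1 : (u ^ (2 * n)).coeff 0 = closedCount d n := by
    have h1 : u ^ (2 * n) = ∏ _i : Fin (2 * n), u := by
      rw [Finset.prod_const, Finset.card_univ, Fintype.card_fin]
    rw [h1, hu]
    rw [Finset.prod_univ_sum]
    have h2 : ∀ x : Fin (2 * n) → Fin d × Bool,
        (∏ i, (AddMonoidAlgebra.single (v (x i)) 1 : AddMonoidAlgebra ℕ (Fin d → ℤ))) =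
        AddMonoidAlgebra.single (∑ i, v (x i)) 1 := by
      intro x
      rw [AddMonoidAlgebra.prod_single, Finset.prod_const_one]
    simp_rw [h2]
    rw [AddMonoidAlgebra.coeff_sum, Finsupp.finset_sum_apply]
    have h3 : ∀ x : Fin (2 * n) → Fin d × Bool,
        (AddMonoidAlgebra.single (∑ i, v (x i)) (1 : ℕ)).coeff 0 = if (∑ i, v (x i)) = 0 then 1 else 0 :=
      fun x => Finsupp.single_apply
    simp_rw [h3]
    rw [closedCount, Nat.card_eq_fintype_card, Fintype.card_subtype, Finset.card_filter]
    rw [Fintype.piFinset_univ]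
  have way2 : (u ^ (2 * n)).coeff 0 = (2 * n).choose n * Xc d n := by
    rw [hu, Finset.sum_pow_eq_sum_piAntidiag]
    have h2 : ∀ k : Fin d × Bool → ℕ,
        ((Nat.multinomial Finset.univ k : AddMonoidAlgebra ℕ (Fin d → ℤ)) *
          ∏ s, (AddMonoidAlgebra.single (v s) 1 : AddMonoidAlgebra ℕ (Fin d → ℤ)) ^ k s) =
        AddMonoidAlgebra.single (∑ s, k s • v s) (Nat.multinomial Finset.univ k) := by
      intro k
      simp_rw [AddMonoidAlgebra.single_pow, one_pow]
      rw [AddMonoidAlgebra.prod_single, Finset.prod_const_one, ← nsmul_eq_mul,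
        AddMonoidAlgebra.smul_single, smul_eq_mul, mul_one]
    simp_rw [h2]
    rw [AddMonoidAlgebra.coeff_sum, Finsupp.finset_sum_apply]
    have h3 : ∀ k : Fin d × Bool → ℕ,
        (AddMonoidAlgebra.single (∑ s, k s • v s) (Nat.multinomial Finset.univ k)).coeff 0 =
        if (∑ s, k s • v s) = 0 then Nat.multinomial Finset.univ k else 0 :=
      fun k => Finsupp.single_apply
    simp_rw [h3]
    -- compute the condition
    have hval : ∀ (k : Fin d × Bool → ℕ) (t : Fin d),
        (∑ s : Fin d × Bool, k s • v s) t = (k (t, true) : ℤ) - k (t, false) := by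
      intro k t
      rw [Finset.sum_apply]
      rw [Fintype.sum_prod_type]
      have hinner : ∀ c : Fin d, (∑ b : Bool, (k (c, b) • v (c, b)) t) =
          if t = c then (k (c, true) : ℤ) - k (c, false) else 0 := by
        intro c
        rw [Fintype.sum_bool]
        by_cases htc : t = c
        · subst htc
          simp only [Pi.smul_apply, hv, stepVec, if_pos rfl, nsmul_eq_mul]
          norm_num
          ring
        · simp [Pi.smul_apply, hv, stepVec, htc]
      rw [Finset.sum_congr rfl fun c _ => hinner c, Finset.sum_ite_eq]
      simp
    have hcond : ∀ k : Fin d × Bool → ℕ,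
        ((∑ s : Fin d × Bool, k s • v s) = 0) ↔ (∀ t, k (t, true) = k (t, false)) := by
      intro k
      rw [funext_iff]
      refine forall_congr' fun t => ?_
      rw [hval k t]
      simp only [Pi.zero_apply]
      rw [sub_eq_zero]
      exact_mod_cast Nat.cast_inj (R := ℤ)
    simp_rw [hcond]
    rw [← Finset.sum_filter]
    rw [Xc, Finset.mul_sum]
    refine Finset.sum_nbij' (fun k => fun t => k (t, true)) (fun m => fun s => m s.1)
      ?_ ?_ ?_ ?_ ?_
    · intro k hk
      simp only [Finset.mem_filter, Finset.mem_piAntidiag] at hk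
      obtain ⟨⟨hsum, -⟩, hbal⟩ := hk
      simp only [Finset.mem_piAntidiag]
      refine ⟨?_, fun t _ => Finset.mem_univ t⟩
      have h' : ∑ s : Fin d × Bool, k s = 2 * ∑ t, k (t, true) := by
        rw [Fintype.sum_prod_type, Finset.mul_sum]
        refine Finset.sum_congr rfl fun t _ => ?_
        rw [Fintype.sum_bool, hbal t, two_mul]
      have h2n : 2 * n = 2 * ∑ t, k (t, true) := by rw [← hsum]; exact h'
      omega
    · intro m hm
      simp only [Finset.mem_piAntidiag] at hm
      refine Finset.mem_filter.mpr ⟨Finset.mem_piAntidiag.mpr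
        ⟨?_, fun s _ => Finset.mem_univ s⟩, fun t => rfl⟩
      rw [_root_.sum_pair, hm.1]
    · intro k hk
      simp only [Finset.mem_filter, Finset.mem_piAntidiag] at hk
      funext s
      obtain ⟨t, b⟩ := s
      cases b
      · simpa using hk.2 t
      · rfl
    · intro m hm
      rfl
    · intro k hk
      simp only [Finset.mem_filter, Finset.mem_piAntidiag] at hk
      obtain ⟨⟨hsum, -⟩, hbal⟩ := hk
      have hkrw : Nat.multinomial Finset.univ k =
          Nat.multinomial Finset.univ (fun s : Fin d × Bool => k (s.1, true)) := by
        refine Nat.multinomial_congr fun s _ => ?_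
        obtain ⟨t, b⟩ := s
        cases b
        · exact (hbal t).symm
        · rfl
      have hsum2 : ∑ t, k (t, true) = n := by
        have h' : ∑ s : Fin d × Bool, k s = 2 * ∑ t, k (t, true) := by
          rw [Fintype.sum_prod_type, Finset.mul_sum]
          refine Finset.sum_congr rfl fun t _ => ?_
          rw [Fintype.sum_bool, hbal t, two_mul]
        have h2n : 2 * n = 2 * ∑ t, k (t, true) := by rw [← hsum]; exact h'
        omega
      have hd := multinomial_double d (fun t => k (t, true))
      rw [hsum2] at hd
      exact hkrw.trans hd
  rw [← way1, way2]

/-- `x_n^{(d)} = A_{2n}^{(d)} / C(2n,n)` (an integer, here as exact natural division). -/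
noncomputable def xSeq (d n : ℕ) : ℕ :=
  closedCount d n / (2 * n).choose n


/-- The sequences `x_n^{(d)}` and `A_{2n}^{(d)}` have the Lucas property, and moreover
`A_{2n}^{(d)} ≡ 0 (mod p)` for `(p-1)/2 < n ≤ p-1`. -/
theorem lucas_property_xSeq_closedCount (d : ℕ) (hd : 1 ≤ d) (p : ℕ) (hp : p.Prime) :
    (∀ n q : ℕ, q ≤ p - 1 →
        xSeq d (n * p + q) ≡ xSeq d n * xSeq d q [MOD p]) ∧
    (∀ n q : ℕ, q ≤ p - 1 →
        closedCount d (n * p + q) ≡ closedCount d n * closedCount d q [MOD p]) ∧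
    (∀ n : ℕ, (p - 1) / 2 < n → n ≤ p - 1 → closedCount d n ≡ 0 [MOD p]) := by
  haveI : Fact p.Prime := ⟨hp⟩
  have hp0 : 0 < p := hp.pos
  have hp2 : 2 ≤ p := hp.two_le
  have hx : ∀ N, xSeq d N = Xc d N := by
    intro N
    rw [xSeq, closedCount_eq,
      Nat.mul_div_cancel_left _ (Nat.choose_pos (Nat.le_mul_of_pos_left N two_pos))]
  refine ⟨?_, ?_, ?_⟩
  · intro n q hq
    have hq' : q < p := by omega
    rw [hx, hx, hx]
    exact Xc_lucas hp d n q hq'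
  · intro n q hq
    have hq' : q < p := by omega
    by_cases h2q : 2 * q < p
    · have hl := Choose.choose_modEq_choose_mod_mul_choose_div_nat
        (p := p) (n := 2 * (n * p + q)) (k := n * p + q)
      have e1 : 2 * (n * p + q) = 2 * q + 2 * n * p := by ring
      have e2 : n * p + q = q + n * p := by ring
      rw [e1, e2, Nat.add_mul_mod_self_right, Nat.add_mul_mod_self_right,
        Nat.add_mul_div_right _ _ hp0, Nat.add_mul_div_right _ _ hp0,
        Nat.mod_eq_of_lt h2q, Nat.mod_eq_of_lt hq',
        Nat.div_eq_of_lt h2q, Nat.div_eq_of_lt hq', zero_add, zero_add, ← e1, ← e2] at hl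
      calc closedCount d (n * p + q)
          = (2 * (n * p + q)).choose (n * p + q) * Xc d (n * p + q) := closedCount_eq d _
        _ ≡ ((2 * q).choose q * (2 * n).choose n) * (Xc d n * Xc d q) [MOD p] :=
            Nat.ModEq.mul hl (Xc_lucas hp d n q hq')
        _ = ((2 * n).choose n * Xc d n) * ((2 * q).choose q * Xc d q) := by ring
        _ = closedCount d n * closedCount d q := by
            rw [← closedCount_eq, ← closedCount_eq]
    · have hple : p ≤ 2 * q := le_of_not_gt h2q
      have hdq : p ∣ (2 * q).choose q := hp.dvd_choose hq' (by omega) hple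
      have hrhs : p ∣ closedCount d n * closedCount d q :=
        Dvd.dvd.mul_left (by rw [closedCount_eq]; exact hdq.mul_right _) _
      have hlhs : p ∣ closedCount d (n * p + q) := by
        rw [closedCount_eq]
        refine Dvd.dvd.mul_right ?_ _
        have hl := Choose.choose_modEq_choose_mod_mul_choose_div_nat
          (p := p) (n := 2 * (n * p + q)) (k := n * p + q)
        have e1 : 2 * (n * p + q) = 2 * q + 2 * n * p := by ring
        have e2 : n * p + q = q + n * p := by ring
        rw [e1, e2, Nat.add_mul_mod_self_right, Nat.add_mul_mod_self_right] at hl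
        have h2qmod : 2 * q % p = 2 * q - p := by
          rw [Nat.mod_eq_sub_mod hple, Nat.mod_eq_of_lt (by omega)]
        rw [h2qmod, Nat.mod_eq_of_lt hq'] at hl
        rw [Nat.choose_eq_zero_of_lt (by omega : 2 * q - p < q), zero_mul] at hl
        rw [← e1, ← e2] at hl
        exact (Nat.modEq_zero_iff_dvd).mp hl
      exact ((Nat.modEq_zero_iff_dvd).mpr hlhs).trans
        ((Nat.modEq_zero_iff_dvd).mpr hrhs).symm
  · intro n h1 h2
    have hnp : n < p := by omega
    have h2n : p ≤ 2 * n := by omega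
    have hdvd : p ∣ (2 * n).choose n := hp.dvd_choose hnp (by omega) h2n
    have : p ∣ closedCount d n := by rw [closedCount_eq]; exact hdvd.mul_right _
    exact (Nat.modEq_zero_iff_dvd).mpr this
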